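/- Let X be a set and ℓ : dom(ℓ) → X a function defined on a countable subset dom(ℓ) ⊆ X^ω. The following are equivalent: (1) X admits a metrizable topology in which every sequence s ∈ dom(ℓ) converges to ℓ(s); (2) X admits a Hausdorff topology in which every sequence s ∈ dom(ℓ) converges to ℓ(s); (3) for every s ∈ dom(ℓ) and x ≠ ℓ(s) the set {n : s_n = x} is finite, and for any s, t ∈ dom(ℓ) with ℓ(s) ≠ ℓ(t) there exists a finite F ⊆ ω such that s_n ≠ t_m for all n, m ∈ ω \ F. -/

import Mathlib

open Filter

namespace Stmt10Aux

variable {X : Type*}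

/-- The "good position" predicate for sequence `j` at position `n`, relative to earlier
thresholds `prev`. -/
def GoodAt (e : ℕ → ℕ → X) (ℓ : (ℕ → X) → X) (x y : X) (prev : ℕ → ℕ) (j n : ℕ) : Prop :=
  (e j n = x → ℓ (e j) = x) ∧ (e j n = y → ℓ (e j) = y) ∧
  ∀ j' < j, ℓ (e j) ≠ ℓ (e j') →
    (e j n ≠ ℓ (e j') ∧ ∀ m, prev j' ≤ m → e j n = e j' m → e j n = ℓ (e j))

lemma goodAt_congr {e : ℕ → ℕ → X} {ℓ : (ℕ → X) → X} {x y : X} {prev prev' : ℕ → ℕ} {j n : ℕ}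
    (h : ∀ j' < j, prev j' = prev' j') (hg : GoodAt e ℓ x y prev j n) :
    GoodAt e ℓ x y prev' j n := by
  obtain ⟨h1, h2, h3⟩ := hg
  refine ⟨h1, h2, fun j' hj' hℓ => ?_⟩
  obtain ⟨c1, c2⟩ := h3 j' hj' hℓ
  exact ⟨c1, fun m hm => c2 m (by rw [h j' hj']; exact hm)⟩

lemma goodAt_ex (e : ℕ → ℕ → X) (ℓ : (ℕ → X) → X)
    (H1 : ∀ j (z : X), z ≠ ℓ (e j) → {n : ℕ | e j n = z}.Finite)
    (H2 : ∀ i j, ℓ (e i) ≠ ℓ (e j) → ∃ N, ∀ n ≥ N, ∀ m ≥ N, e i n ≠ e j m)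
    (x y : X) (j : ℕ) (prev : ℕ → ℕ) :
    ∃ N', ∀ n, N' ≤ n → GoodAt e ℓ x y prev j n := by
  classical
  have hval : ∀ z : X, ∀ᶠ n in atTop, (e j n = z → ℓ (e j) = z) := by
    intro z
    by_cases hz : ℓ (e j) = z
    · exact Eventually.of_forall fun _ _ => hz
    · have hfin := H1 j z fun h => hz h.symm
      rw [← Nat.cofinite_eq_atTop]
      exact hfin.eventually_cofinite_notMem.mono fun n hn he => absurd he hn
  have hmain : ∀ j' ∈ Finset.range j, ∀ᶠ n in atTop,
      (ℓ (e j) ≠ ℓ (e j') →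
        (e j n ≠ ℓ (e j') ∧ ∀ m, prev j' ≤ m → e j n = e j' m → e j n = ℓ (e j))) := by
    intro j' _
    by_cases hℓ : ℓ (e j) = ℓ (e j')
    · exact Eventually.of_forall fun n hn => absurd hℓ hn
    · obtain ⟨N₀, hN₀⟩ := H2 j j' hℓ
      have ha : ∀ᶠ n in atTop, e j n ≠ ℓ (e j') := by
        have hfin := H1 j (ℓ (e j')) fun h => hℓ h.symm
        rw [← Nat.cofinite_eq_atTop]
        exact hfin.eventually_cofinite_notMem.mono fun n hn he => hn he
      have hb : ∀ᶠ n in atTop, ∀ m ∈ Finset.Ico (prev j') N₀,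
          (e j' m ≠ ℓ (e j) → e j n ≠ e j' m) := by
        rw [eventually_all_finset]
        intro m _
        by_cases hm : e j' m = ℓ (e j)
        · exact Eventually.of_forall fun n hn => absurd hm hn
        · have hfin := H1 j (e j' m) hm
          rw [← Nat.cofinite_eq_atTop]
          exact hfin.eventually_cofinite_notMem.mono fun n hn _ he => hn he
      have hc : ∀ᶠ n in atTop, N₀ ≤ n := eventually_ge_atTop N₀
      filter_upwards [ha, hb, hc] with n ha' hb' hc'
      intro _
      refine ⟨ha', fun m hm heq => ?_⟩
      by_cases hmN : N₀ ≤ m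
      · exact absurd heq (hN₀ n hc' m hmN)
      · have hmem : m ∈ Finset.Ico (prev j') N₀ := Finset.mem_Ico.2 ⟨hm, by omega⟩
        by_cases hv : e j' m = ℓ (e j)
        · rw [heq, hv]
        · exact absurd heq (hb' m hmem hv)
  have hev : ∀ᶠ n in atTop, GoodAt e ℓ x y prev j n := by
    have h3 := (eventually_all_finset (Finset.range j)).2 hmain
    filter_upwards [hval x, hval y, h3] with n h1 h2 h3'
    exact ⟨h1, h2, fun j' hj' hℓ => h3' j' (Finset.mem_range.2 hj') hℓ⟩
  obtain ⟨N', hN'⟩ := eventually_atTop.1 hev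
  exact ⟨N', fun n hn => hN' n hn⟩

/-- Generic "history" recursion. -/
def hist {α : Type*} (d : α) (F : ℕ → (ℕ → α) → α) : ℕ → ℕ → α
  | 0 => fun _ => d
  | (k+1) => Function.update (hist d F k) k (F k (hist d F k))

lemma hist_val {α : Type*} (d : α) (F : ℕ → (ℕ → α) → α) (j : ℕ) :
    hist d F (j+1) j = F j (hist d F j) := by
  show Function.update (hist d F j) j (F j (hist d F j)) j = _
  rw [Function.update_self]

lemma hist_stab {α : Type*} (d : α) (F : ℕ → (ℕ → α) → α) :
    ∀ k j, j < k → hist d F k j = hist d F (j+1) j := by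
  intro k
  induction k with
  | zero => intro j h; omega
  | succ k IH =>
    intro j hj
    rcases Nat.lt_succ_iff_lt_or_eq.1 hj with h | h
    · show Function.update (hist d F k) k (F k (hist d F k)) j = _
      rw [Function.update_of_ne (by omega)]
      exact IH j h
    · subst h; rfl

/-- Tail-forcing relation. -/
def Forced (e : ℕ → ℕ → X) (ℓ : (ℕ → X) → X) (N : ℕ → ℕ) (j' j : ℕ) : Prop :=
  ℓ (e j) = ℓ (e j') ∨ ∃ m, N j' ≤ m ∧ e j' m = ℓ (e j)

open Classical in
noncomputable def sigmaStep (e : ℕ → ℕ → X) (ℓ : (ℕ → X) → X) (N : ℕ → ℕ) (x : X)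
    (j : ℕ) (prev : ℕ → Bool) : Bool :=
  decide (ℓ (e j) = x ∨ ∃ j', j' < j ∧ Forced e ℓ N j' j ∧ prev j' = true)

lemma sep_lemma (e : ℕ → ℕ → X) (ℓ : (ℕ → X) → X)
    (H1 : ∀ j (z : X), z ≠ ℓ (e j) → {n : ℕ | e j n = z}.Finite)
    (H2 : ∀ i j, ℓ (e i) ≠ ℓ (e j) → ∃ N, ∀ n ≥ N, ∀ m ≥ N, e i n ≠ e j m)
    {x y : X} (hxy : x ≠ y) :
    ∃ (S : Set X) (N : ℕ → ℕ), x ∈ S ∧ y ∉ S ∧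
      ∀ j n, N j ≤ n → (e j n ∈ S ↔ ℓ (e j) ∈ S) := by
  classical
  have hex : ∀ (j : ℕ) (prev : ℕ → ℕ), ∃ N', ∀ n, N' ≤ n → GoodAt e ℓ x y prev j n :=
    fun j prev => goodAt_ex e ℓ H1 H2 x y j prev
  choose FN hFN using hex
  set Nf : ℕ → ℕ := fun j => hist 0 FN (j+1) j with hNfdef
  have hNf : ∀ j n, Nf j ≤ n → GoodAt e ℓ x y Nf j n := by
    intro j n hn
    have h0 : GoodAt e ℓ x y (hist 0 FN j) j n := by
      apply hFN j (hist 0 FN j) n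
      have hn' : hist 0 FN (j+1) j ≤ n := hn
      rwa [hist_val] at hn'
    exact goodAt_congr (fun j' hj' => (hist_stab 0 FN j j' hj')) h0
  set σf : ℕ → Bool := fun j => hist false (sigmaStep e ℓ Nf x) (j+1) j with hσdef
  have hσ : ∀ j, σf j = true ↔
      (ℓ (e j) = x ∨ ∃ j', j' < j ∧ Forced e ℓ Nf j' j ∧ σf j' = true) := by
    intro j
    have h1 : σf j = sigmaStep e ℓ Nf x j (hist false (sigmaStep e ℓ Nf x) j) := by
      rw [hσdef]; exact hist_val _ _ j
    rw [h1, sigmaStep, decide_eq_true_eq]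
    constructor
    · rintro (h | ⟨j', hj', hf, hv⟩)
      · exact Or.inl h
      · refine Or.inr ⟨j', hj', hf, ?_⟩
        rwa [hist_stab false _ j j' hj'] at hv
    · rintro (h | ⟨j', hj', hf, hv⟩)
      · exact Or.inl h
      · refine Or.inr ⟨j', hj', hf, ?_⟩
        rwa [hist_stab false _ j j' hj']
  -- main invariant
  have Q : ∀ j, (∀ j', j' < j → Forced e ℓ Nf j' j → σf j = σf j') ∧
      (ℓ (e j) = x → σf j = true) ∧ (ℓ (e j) = y → σf j = false) := by
    intro j
    induction j using Nat.strong_induction_on with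
    | _ j IH =>
    have lemi : ∀ j₁, j₁ < j → Forced e ℓ Nf j₁ j → ℓ (e j) = x → σf j₁ = true := by
      intro j₁ h₁ hf hx
      rcases hf with hf | ⟨m, hm, hem⟩
      · exact (IH j₁ h₁).2.1 (by rw [← hf, hx])
      · exact (IH j₁ h₁).2.1 ((hNf j₁ m hm).1 (by rw [hem, hx]))
    have lemii : ∀ j₁, j₁ < j → Forced e ℓ Nf j₁ j → ℓ (e j) = y → σf j₁ = false := by
      intro j₁ h₁ hf hy
      rcases hf with hf | ⟨m, hm, hem⟩
      · exact (IH j₁ h₁).2.2 (by rw [← hf, hy])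
      · exact (IH j₁ h₁).2.2 ((hNf j₁ m hm).2.1 (by rw [hem, hy]))
    have lemiii : ∀ j₁ j₂, j₁ < j₂ → j₂ < j →
        Forced e ℓ Nf j₁ j → Forced e ℓ Nf j₂ j → σf j₂ = σf j₁ := by
      intro j₁ j₂ h12 h2j hf1 hf2
      have key : Forced e ℓ Nf j₁ j₂ → σf j₂ = σf j₁ := fun hf => (IH j₂ h2j).1 j₁ h12 hf
      rcases hf2 with hf2 | ⟨m₂, hm₂, hem₂⟩
      · -- ℓ (e j) = ℓ (e j₂)
        rcases hf1 with hf1 | ⟨m₁, hm₁, hem₁⟩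
        · exact key (Or.inl (by rw [← hf2, hf1]))
        · exact key (Or.inr ⟨m₁, hm₁, by rw [hem₁, hf2]⟩)
      · -- e j₂ m₂ = ℓ (e j)
        by_cases hℓ12 : ℓ (e j₂) = ℓ (e j₁)
        · exact key (Or.inl hℓ12)
        rcases hf1 with hf1 | ⟨m₁, hm₁, hem₁⟩
        · -- ℓ (e j) = ℓ (e j₁), so e j₂ m₂ = ℓ (e j₁)
          exact absurd (by rw [hem₂, hf1]) ((hNf j₂ m₂ hm₂).2.2 j₁ h12 hℓ12).1
        · -- both tails contain ℓ (e j)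
          have hcol : e j₂ m₂ = e j₁ m₁ := by rw [hem₂, hem₁]
          have h2 : e j₂ m₂ = ℓ (e j₂) :=
            ((hNf j₂ m₂ hm₂).2.2 j₁ h12 hℓ12).2 m₁ hm₁ hcol
          exact key (Or.inr ⟨m₁, hm₁, by rw [hem₁, ← hem₂, h2]⟩)
    refine ⟨?_, fun hx => (hσ j).2 (Or.inl hx), ?_⟩
    · intro j' hj' hf
      by_cases hσj' : σf j' = true
      · rw [(hσ j).2 (Or.inr ⟨j', hj', hf, hσj'⟩), hσj']
      · have hσj'f : σf j' = false := by simpa using hσj'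
        rw [hσj'f]
        by_contra hne
        have hjt : σf j = true := by simpa using hne
        rcases (hσ j).1 hjt with hx | ⟨j₁, h₁, hf₁, hσ₁⟩
        · exact hσj' (lemi j' hj' hf hx)
        · rcases lt_trichotomy j₁ j' with h | h | h
          · exact hσj' (by rw [lemiii j₁ j' h hj' hf₁ hf]; exact hσ₁)
          · subst h; exact hσj' hσ₁
          · exact hσj' (by rw [lemiii j' j₁ h h₁ hf hf₁] at hσ₁; exact hσ₁)
    · intro hy
      by_contra hne
      have hjt : σf j = true := by simpa using hne
      rcases (hσ j).1 hjt with hx | ⟨j₁, h₁, hf₁, hσ₁⟩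
      · exact hxy (by rw [← hx, hy])
      · rw [lemii j₁ h₁ hf₁ hy] at hσ₁; exact absurd hσ₁ (by simp)
  have L1 : ∀ j j', ℓ (e j) = ℓ (e j') → σf j = σf j' := by
    intro j j' hℓ
    rcases lt_trichotomy j' j with h | h | h
    · exact (Q j).1 j' h (Or.inl hℓ)
    · rw [h]
    · exact ((Q j').1 j h (Or.inl hℓ.symm)).symm
  have L2 : ∀ j j' m, σf j ≠ σf j' → Nf j' ≤ m → e j' m ≠ ℓ (e j) := by
    intro j j' m hne hm heq
    by_cases hℓ : ℓ (e j) = ℓ (e j')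
    · exact hne (L1 _ _ hℓ)
    rcases lt_trichotomy j' j with h | h | h
    · exact hne ((Q j).1 j' h (Or.inr ⟨m, hm, heq⟩))
    · exact hne (by rw [h])
    · exact ((hNf j' m hm).2.2 j h (fun hh => hℓ hh.symm)).1 heq
  have L3 : ∀ j j' n m, σf j ≠ σf j' → Nf j ≤ n → Nf j' ≤ m → e j n ≠ e j' m := by
    intro j j' n m hne hn hm heq
    by_cases hℓ : ℓ (e j) = ℓ (e j')
    · exact hne (L1 _ _ hℓ)
    rcases lt_trichotomy j' j with h | h | h
    · have h1 : e j n = ℓ (e j) := ((hNf j n hn).2.2 j' h hℓ).2 m hm heq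
      exact L2 j j' m hne hm (by rw [← heq, h1])
    · exact hne (by rw [h])
    · have h1 : e j' m = ℓ (e j') := ((hNf j' m hm).2.2 j h (fun hh => hℓ hh.symm)).2 n hn heq.symm
      exact L2 j' j n (Ne.symm hne) hn (by rw [heq, h1])
  refine ⟨{z | z = x ∨ ∃ j, σf j = true ∧ (ℓ (e j) = z ∨ ∃ m, Nf j ≤ m ∧ e j m = z)}, Nf,
    Or.inl rfl, ?_, ?_⟩
  · rintro (h | ⟨j, hσj, hz | ⟨m, hm, hz⟩⟩)
    · exact hxy h.symm
    · rw [(Q j).2.2 hz] at hσj; exact absurd hσj (by simp)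
    · rw [(Q j).2.2 ((hNf j m hm).2.1 hz)] at hσj; exact absurd hσj (by simp)
  · intro j n hn
    by_cases hσj : σf j = true
    · constructor
      · intro _; exact Or.inr ⟨j, hσj, Or.inl rfl⟩
      · intro _; exact Or.inr ⟨j, hσj, Or.inr ⟨n, hn, rfl⟩⟩
    · have hσf : σf j = false := by simpa using hσj
      constructor
      · rintro (h | ⟨j', hσ', hz | ⟨m, hm, hz⟩⟩)
        · exact absurd ((hNf j n hn).1 h) (fun hx' => hσj ((Q j).2.1 hx'))
        · -- e j n = ℓ (e j')
          exact absurd hz.symm (L2 j' j n (by rw [hσ', hσf]; simp) hn)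
        · exact absurd hz.symm (L3 j j' n m (by rw [hσ', hσf]; simp) hn hm)
      · rintro (h | ⟨j', hσ', hz | ⟨m, hm, hz⟩⟩)
        · exact absurd h (fun hx' => hσj ((Q j).2.1 hx'))
        · exact absurd (L1 j j' hz.symm) (by rw [hσ', hσf]; simp)
        · exact absurd hz (L2 j j' m (by rw [hσ', hσf]; simp) hm)

/-- Build a metric from a countable separating family of "coherent" sets. -/
lemma exists_metric (C : Set X) (S : ℕ → Set X)
    (hne : ∀ a b : X, a ∈ C → b ∈ C → a ≠ b →
      {k : ℕ | ¬((a ∈ S k) ↔ (b ∈ S k))}.Nonempty) :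
    ∃ m : MetricSpace X,
      (∀ a b : X, a ≠ b → ¬(a ∈ C ∧ b ∈ C) → @dist X m.toPseudoMetricSpace.toDist a b = 1) ∧
      (∀ a b : X, a ≠ b → a ∈ C → b ∈ C →
        @dist X m.toPseudoMetricSpace.toDist a b =
          (2⁻¹ : ℝ) ^ sInf {k : ℕ | ¬((a ∈ S k) ↔ (b ∈ S k))}) := by
  classical
  set d : X → X → ℝ := fun a b =>
    if a = b then 0 else if a ∈ C ∧ b ∈ C then
      (2⁻¹ : ℝ) ^ sInf {k : ℕ | ¬((a ∈ S k) ↔ (b ∈ S k))} else 1 with hd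
  have hpow : ∀ (K k : ℕ), K ≤ k → ((2:ℝ)⁻¹) ^ k ≤ ((2:ℝ)⁻¹) ^ K :=
    fun K k h => pow_le_pow_of_le_one (by norm_num) (by norm_num) h
  have hnonneg : ∀ a b, 0 ≤ d a b := by
    intro a b; rw [hd]; dsimp only; split_ifs <;> positivity
  have hle1 : ∀ a b, d a b ≤ 1 := by
    intro a b; rw [hd]; dsimp only
    split_ifs
    · norm_num
    · calc ((2:ℝ)⁻¹) ^ sInf _ ≤ ((2:ℝ)⁻¹) ^ 0 := hpow 0 _ (Nat.zero_le _)
        _ = 1 := pow_zero _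
    · exact le_refl 1
  have hself : ∀ a, d a a = 0 := fun a => by rw [hd]; simp
  have hsymm : ∀ a b, d a b = d b a := by
    intro a b
    rw [hd]; dsimp only
    by_cases h : a = b
    · subst h; simp
    · rw [if_neg h, if_neg (Ne.symm h)]
      have hs : {k : ℕ | ¬((a ∈ S k) ↔ (b ∈ S k))} = {k : ℕ | ¬((b ∈ S k) ↔ (a ∈ S k))} := by
        ext k; constructor <;> (intro hk hiff; exact hk hiff.symm)
      rw [hs]
      exact if_congr and_comm rfl rfl
  have hgen : ∀ a b : X, a ≠ b → (¬(a ∈ C ∧ b ∈ C) → d a b = 1) ∧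
      ((a ∈ C ∧ b ∈ C) →
        d a b = (2⁻¹ : ℝ) ^ sInf {k : ℕ | ¬((a ∈ S k) ↔ (b ∈ S k))}) := by
    intro a b hab
    constructor
    · intro h; rw [hd]; dsimp only; rw [if_neg hab, if_neg h]
    · intro h; rw [hd]; dsimp only; rw [if_neg hab, if_pos h]
  have htri : ∀ a b c, d a c ≤ d a b + d b c := by
    intro a b c
    by_cases hac : a = c
    · have h0 : d a c = 0 := by rw [hac]; exact hself c
      rw [h0]
      have h1 := hnonneg a b; have h2 := hnonneg b c; linarith
    by_cases hab : a = b
    · subst hab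
      rw [hself]
      linarith [le_refl (d a c)]
    by_cases hbc : b = c
    · subst hbc
      rw [hself]
      linarith [le_refl (d a b)]
    by_cases hC : a ∈ C ∧ c ∈ C
    · by_cases hb : b ∈ C
      · have hac2 := (hgen a c hac).2 hC
        have hab2 := (hgen a b hab).2 ⟨hC.1, hb⟩
        have hbc2 := (hgen b c hbc).2 ⟨hb, hC.2⟩
        have hk0mem := Nat.sInf_mem (hne a c hC.1 hC.2 hac)
        set k0 := sInf {k : ℕ | ¬((a ∈ S k) ↔ (c ∈ S k))} with hk0
        have hsplit : ¬((a ∈ S k0) ↔ (b ∈ S k0)) ∨ ¬((b ∈ S k0) ↔ (c ∈ S k0)) := by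
          by_contra hcon
          push_neg at hcon
          exact hk0mem (hcon.1.trans hcon.2)
        rcases hsplit with h | h
        · have hle : sInf {k : ℕ | ¬((a ∈ S k) ↔ (b ∈ S k))} ≤ k0 := Nat.sInf_le h
          have hmain : d a c ≤ d a b := by rw [hac2, hab2]; exact hpow _ _ hle
          linarith [hnonneg b c]
        · have hle : sInf {k : ℕ | ¬((b ∈ S k) ↔ (c ∈ S k))} ≤ k0 := Nat.sInf_le h
          have hmain : d a c ≤ d b c := by rw [hac2, hbc2]; exact hpow _ _ hle
          linarith [hnonneg a b]
      · have h1 := (hgen a b hab).1 (fun hh => hb hh.2)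
        have h2 := (hgen b c hbc).1 (fun hh => hb hh.1)
        have := hle1 a c; linarith
    · have hlhs := (hgen a c hac).1 hC
      by_cases hb : b ∈ C
      · rcases not_and_or.1 hC with h | h
        · have h1 := (hgen a b hab).1 (fun hh => h hh.1)
          have := hnonneg b c; linarith
        · have h2 := (hgen b c hbc).1 (fun hh => h hh.2)
          have := hnonneg a b; linarith
      · have h1 := (hgen a b hab).1 (fun hh => hb hh.2)
        have := hnonneg b c; linarith
  have heq0 : ∀ a b, d a b = 0 → a = b := by
    intro a b h
    by_contra hab
    rw [hd] at h; dsimp only at h; rw [if_neg hab] at h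
    by_cases hC : a ∈ C ∧ b ∈ C
    · rw [if_pos hC] at h
      exact absurd h (ne_of_gt (pow_pos (by norm_num) _))
    · rw [if_neg hC] at h; norm_num at h
  let m : MetricSpace X :=
    { dist := d
      dist_self := hself
      dist_comm := hsymm
      dist_triangle := htri
      eq_of_dist_eq_zero := fun {a b} h => heq0 a b h }
  refine ⟨m, ?_, ?_⟩
  · intro a b hab h
    show d a b = 1
    exact (hgen a b hab).1 h
  · intro a b hab ha hb
    show d a b = _
    exact (hgen a b hab).2 ⟨ha, hb⟩

end Stmt10Aux

open Stmt10Aux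

/-- For a set `X` and a function `ℓ` on a countable set of sequences `D ⊆ X^ω`,
the following are equivalent:
(1) `X` admits a metrizable topology in which every `s ∈ D` converges to `ℓ s`;
(2) `X` admits a Hausdorff topology in which every `s ∈ D` converges to `ℓ s`;
(3) `ℓ` is `T₂`-separating. -/
theorem stmt10 {X : Type*} (D : Set (ℕ → X)) (hD : D.Countable) (ℓ : (ℕ → X) → X) :
    ((∃ τ : TopologicalSpace X, @TopologicalSpace.MetrizableSpace X τ ∧
        ∀ s ∈ D, Tendsto s atTop (@nhds X τ (ℓ s))) ↔
      ((∀ s ∈ D, ∀ x : X, x ≠ ℓ s → {n : ℕ | s n = x}.Finite) ∧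
       (∀ s ∈ D, ∀ t ∈ D, ℓ s ≠ ℓ t →
         ∃ F : Set ℕ, F.Finite ∧ ∀ n ∉ F, ∀ m ∉ F, s n ≠ t m))) ∧
    ((∃ τ : TopologicalSpace X, @T2Space X τ ∧
        ∀ s ∈ D, Tendsto s atTop (@nhds X τ (ℓ s))) ↔
      ((∀ s ∈ D, ∀ x : X, x ≠ ℓ s → {n : ℕ | s n = x}.Finite) ∧
       (∀ s ∈ D, ∀ t ∈ D, ℓ s ≠ ℓ t →
         ∃ F : Set ℕ, F.Finite ∧ ∀ n ∉ F, ∀ m ∉ F, s n ≠ t m))) := by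
  classical
  have t2to3 : (∃ τ : TopologicalSpace X, @T2Space X τ ∧
        ∀ s ∈ D, Tendsto s atTop (@nhds X τ (ℓ s))) →
      ((∀ s ∈ D, ∀ x : X, x ≠ ℓ s → {n : ℕ | s n = x}.Finite) ∧
       (∀ s ∈ D, ∀ t ∈ D, ℓ s ≠ ℓ t →
         ∃ F : Set ℕ, F.Finite ∧ ∀ n ∉ F, ∀ m ∉ F, s n ≠ t m)) := by
    rintro ⟨τ, hT2, hconv⟩
    letI := τ
    haveI := hT2
    constructor
    · intro s hs x hx
      by_contra hinf
      have hfreq : ∃ᶠ n in atTop, s n = x := Nat.frequently_atTop_iff_infinite.2 hinf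
      haveI hne : NeBot (atTop ⊓ 𝓟 {n | s n = x}) := frequently_iff_neBot.1 hfreq
      have h1 : Tendsto s (atTop ⊓ 𝓟 {n | s n = x}) (nhds (ℓ s)) :=
        (hconv s hs).mono_left inf_le_left
      have h2 : Tendsto s (atTop ⊓ 𝓟 {n | s n = x}) (nhds x) := by
        have hev : ∀ᶠ n in atTop ⊓ 𝓟 {n | s n = x}, s n = x :=
          eventually_inf_principal.2 (Eventually.of_forall fun n hn => hn)
        exact Tendsto.congr' (hev.mono fun n hn => hn.symm) tendsto_const_nhds
      exact hx (tendsto_nhds_unique h2 h1)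
    · intro s hs t ht hst
      obtain ⟨U, V, hU, hV, haU, hbV, hUV⟩ := t2_separation hst
      have h1 : ∀ᶠ n in atTop, s n ∈ U :=
        (hconv s hs).eventually (eventually_of_mem (hU.mem_nhds haU) fun z hz => hz)
      have h2 : ∀ᶠ n in atTop, t n ∈ V :=
        (hconv t ht).eventually (eventually_of_mem (hV.mem_nhds hbV) fun z hz => hz)
      obtain ⟨N₁, hN₁⟩ := eventually_atTop.1 h1
      obtain ⟨N₂, hN₂⟩ := eventually_atTop.1 h2
      refine ⟨Set.Iio (max N₁ N₂), Set.finite_Iio _, fun n hn m hm heq => ?_⟩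
      simp only [Set.mem_Iio, not_lt] at hn hm
      have hsU : s n ∈ U := hN₁ n (le_trans (le_max_left _ _) hn)
      have htV : s n ∈ V := heq ▸ hN₂ m (le_trans (le_max_right _ _) hm)
      exact Set.disjoint_left.1 hUV hsU htV
  have met2t2 : (∃ τ : TopologicalSpace X, @TopologicalSpace.MetrizableSpace X τ ∧
        ∀ s ∈ D, Tendsto s atTop (@nhds X τ (ℓ s))) →
      (∃ τ : TopologicalSpace X, @T2Space X τ ∧
        ∀ s ∈ D, Tendsto s atTop (@nhds X τ (ℓ s))) := by
    rintro ⟨τ, hm, hc⟩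
    refine ⟨τ, ?_, hc⟩
    letI := τ
    haveI := hm
    infer_instance
  have key : ((∀ s ∈ D, ∀ x : X, x ≠ ℓ s → {n : ℕ | s n = x}.Finite) ∧
       (∀ s ∈ D, ∀ t ∈ D, ℓ s ≠ ℓ t →
         ∃ F : Set ℕ, F.Finite ∧ ∀ n ∉ F, ∀ m ∉ F, s n ≠ t m)) →
      (∃ τ : TopologicalSpace X, @TopologicalSpace.MetrizableSpace X τ ∧
        ∀ s ∈ D, Tendsto s atTop (@nhds X τ (ℓ s))) := by
    rintro ⟨h3a, h3b⟩
    rcases D.eq_empty_or_nonempty with hDe | hDne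
    · let m : MetricSpace X :=
        { dist := fun a b => if a = b then 0 else 1
          dist_self := fun a => by simp
          dist_comm := fun a b => by
            by_cases h : a = b
            · subst h; rfl
            · show (if a = b then (0:ℝ) else 1) = (if b = a then (0:ℝ) else 1)
              rw [if_neg h, if_neg (Ne.symm h)]
          dist_triangle := fun a b c => by
            show (if a = c then (0:ℝ) else 1) ≤
              (if a = b then (0:ℝ) else 1) + (if b = c then (0:ℝ) else 1)
            by_cases h1 : a = b
            · subst h1; simp
            · rw [if_neg h1]
              split_ifs <;> norm_num
          eq_of_dist_eq_zero := fun {a b} h => by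
            by_cases hab : a = b
            · exact hab
            · exfalso
              have : (if a = b then (0:ℝ) else 1) = 0 := h
              rw [if_neg hab] at this
              norm_num at this }
      refine ⟨m.toUniformSpace.toTopologicalSpace, (by letI := m; infer_instance), ?_⟩
      intro s hs
      rw [hDe] at hs
      exact absurd hs (Set.notMem_empty s)
    · obtain ⟨e, hDe⟩ := hD.exists_eq_range hDne
      have heD : ∀ j, e j ∈ D := fun j => hDe ▸ Set.mem_range_self j
      have H1 : ∀ j (z : X), z ≠ ℓ (e j) → {n : ℕ | e j n = z}.Finite :=
        fun j z hz => h3a (e j) (heD j) z hz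
      have H2 : ∀ i j, ℓ (e i) ≠ ℓ (e j) → ∃ N, ∀ n ≥ N, ∀ m ≥ N, e i n ≠ e j m := by
        intro i j hij
        obtain ⟨F, hF, hFd⟩ := h3b (e i) (heD i) (e j) (heD j) hij
        obtain ⟨b, hb⟩ := hF.bddAbove
        refine ⟨b + 1, fun n hn m hm => ?_⟩
        exact hFd n (fun hnF => by have := hb hnF; omega) m (fun hmF => by have := hb hmF; omega)
      set C : Set X :=
        Set.range (fun j => ℓ (e j)) ∪ Set.range (fun p : ℕ × ℕ => e p.1 p.2) with hC
      have hCc : C.Countable := (Set.countable_range _).union (Set.countable_range _)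
      have hCne : C.Nonempty := ⟨ℓ (e 0), Set.mem_union_left _ ⟨0, rfl⟩⟩
      obtain ⟨q, hq⟩ := (hCc.prod hCc).exists_eq_range (hCne.prod hCne)
      have hsep : ∀ k, ∃ (S : Set X) (N : ℕ → ℕ),
          ((q k).1 ≠ (q k).2 → (q k).1 ∈ S ∧ (q k).2 ∉ S) ∧
          ∀ j n, N j ≤ n → (e j n ∈ S ↔ ℓ (e j) ∈ S) := by
        intro k
        by_cases hk : (q k).1 = (q k).2
        · exact ⟨∅, fun _ => 0, fun h => absurd hk h, fun j n _ => Iff.rfl⟩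
        · obtain ⟨S, N, hx1, hx2, hx3⟩ := sep_lemma e ℓ H1 H2 hk
          exact ⟨S, N, fun _ => ⟨hx1, hx2⟩, hx3⟩
      choose Sk Nk hSk1 hSk2 using hsep
      have hsepne : ∀ a b : X, a ∈ C → b ∈ C → a ≠ b →
          {k : ℕ | ¬((a ∈ Sk k) ↔ (b ∈ Sk k))}.Nonempty := by
        intro a b ha hb hab
        have hmem : (a, b) ∈ C ×ˢ C := Set.mem_prod.2 ⟨ha, hb⟩
        rw [hq] at hmem
        obtain ⟨k, hk⟩ := hmem
        have h := hSk1 k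
        rw [hk] at h
        obtain ⟨hin, hout⟩ := h hab
        exact ⟨k, fun hiff => hout (hiff.1 hin)⟩
      obtain ⟨m, hm1, hm2⟩ := exists_metric C Sk hsepne
      refine ⟨m.toUniformSpace.toTopologicalSpace, (by letI := m; infer_instance), ?_⟩
      intro s hs
      rw [hDe] at hs
      obtain ⟨j, rfl⟩ := hs
      letI := m
      rw [Metric.tendsto_atTop]
      intro ε hε
      obtain ⟨K, hK⟩ := exists_pow_lt_of_lt_one hε (by norm_num : (2⁻¹:ℝ) < 1)
      refine ⟨(Finset.range K).sup (fun k => Nk k j), fun n hn => ?_⟩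
      by_cases heq : e j n = ℓ (e j)
      · rw [heq]
        simpa using hε
      have haC : e j n ∈ C := Set.mem_union_right _ ⟨(j, n), rfl⟩
      have hbC : ℓ (e j) ∈ C := Set.mem_union_left _ ⟨j, rfl⟩
      rw [hm2 (e j n) (ℓ (e j)) heq haC hbC]
      have hKle : K ≤ sInf {k : ℕ | ¬((e j n ∈ Sk k) ↔ (ℓ (e j) ∈ Sk k))} := by
        by_contra hlt
        rw [not_le] at hlt
        have hsne := hsepne (e j n) (ℓ (e j)) haC hbC heq
        have hmem := Nat.sInf_mem hsne
        have hble : Nk (sInf {k : ℕ | ¬((e j n ∈ Sk k) ↔ (ℓ (e j) ∈ Sk k))}) j ≤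
            (Finset.range K).sup (fun k => Nk k j) :=
          Finset.le_sup (f := fun k => Nk k j) (Finset.mem_range.2 hlt)
        exact hmem (hSk2 _ j n (le_trans hble hn))
      calc ((2:ℝ)⁻¹) ^ sInf {k : ℕ | ¬((e j n ∈ Sk k) ↔ (ℓ (e j) ∈ Sk k))}
          ≤ ((2:ℝ)⁻¹) ^ K := pow_le_pow_of_le_one (by norm_num) (by norm_num) hKle
        _ < ε := hK
  exact ⟨⟨fun hm' => t2to3 (met2t2 hm'), key⟩, t2to3, fun h => met2t2 (key h)⟩
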